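/- Let S be a finite type, M : Ω → S a random variable, and for every m ∈ S let Y_m : Ω → ℝ be an integrable random variable such that Y_m and M are independent. If the composed variable ω ↦ Y_{M(ω)}(ω) is integrable, then E[ω ↦ Y_{M(ω)}(ω)] = Σ_{m ∈ S} E[Y_m] · P(M = m). -/

import Mathlib

open MeasureTheory ProbabilityTheory

/-- Expectation form of the factorization: `E[Y(M)] = Σ_m E[Y_m] · P(M = m)`
under the cross-world independence assumption `Y_m ⟂ M` for every `m`. -/
theorem nested_potential_outcome_expectation
    {Ω : Type*} [MeasurableSpace Ω] (P : Measure Ω) [IsProbabilityMeasure P]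
    {S : Type*} [Fintype S] [MeasurableSpace S] [MeasurableSingletonClass S]
    (M : Ω → S) (hM : Measurable M)
    (Y : S → Ω → ℝ) (hYmeas : ∀ m, Measurable (Y m))
    (hYint : ∀ m, Integrable (Y m) P)
    (hindep : ∀ m, IndepFun (Y m) M P)
    (hint : Integrable (fun ω => Y (M ω) ω) P) :
    ∫ ω, Y (M ω) ω ∂P = ∑ m : S, (∫ ω, Y m ω ∂P) * (P {ω | M ω = m}).toReal := by
  classical
  set g : S → S → ℝ := fun m => Set.indicator {m} (fun _ => (1:ℝ)) with hg
  have hgm : ∀ m, Measurable (g m) := fun m =>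
    measurable_const.indicator (measurableSet_singleton m)
  have hfun : (fun ω => Y (M ω) ω)
      = fun ω => ∑ m : S, Y m ω * g m (M ω) := by
    funext ω
    rw [Finset.sum_eq_single (M ω)]
    · simp [hg, Set.indicator_apply]
    · intro b _ hb; simp [hg, Set.indicator_apply, Ne.symm hb]
    · simp
  rw [hfun, integral_finset_sum]
  · refine Finset.sum_congr rfl fun m _ => ?_
    have hind : IndepFun (Y m) (fun ω => g m (M ω)) P :=
      (hindep m).comp measurable_id (hgm m)
    have key := hind.integral_fun_mul_eq_mul_integral (hYint m).aestronglyMeasurable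
        ((hgm m).comp hM).aestronglyMeasurable
    refine key.trans ?_
    congr 1
    have : (fun ω => g m (M ω))
        = Set.indicator {ω | M ω = m} (fun _ => (1:ℝ)) := by
      funext ω; simp [hg, Set.indicator_apply, Set.mem_setOf_eq, Pi.single_apply]
    have hs : MeasurableSet {ω | M ω = m} := hM (measurableSet_singleton m)
    rw [this, integral_indicator hs]
    simp [measureReal_def]
  · intro m _
    refine ((hYint m).bdd_mul ((hgm m).comp hM).aestronglyMeasurable
      (c := 1) (ae_of_all _ fun ω => ?_)).congr (ae_of_all _ fun ω => mul_comm _ _)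
    by_cases h : M ω = m <;> simp [hg, Set.indicator_apply, h]
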